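/- arXiv:1207.2393 — 2 statements merged into one kernel-verified Lean document; each statement's English description precedes it below -/
import Mathlib

section
/- Let n and r be integers with 1 ≤ r ≤ n − 2. Every finite simple graph G on n vertices with edge connectivity exactly r satisfies H(G) ≤ H(K(n−1,r)), with equality if and only if G is isomorphic to K(n−1,r). -/
open SimpleGraph

open Finset

/-- The Harary index of a finite simple graph: sum of reciprocals of distances over
unordered pairs of distinct vertices (pairs at infinite distance contribute `0`,
since `SimpleGraph.dist` is `0` there and `1/0 = 0` in `ℝ`). -/
noncomputable def hararyIndex {V : Type*} [Fintype V] (G : SimpleGraph V) : ℝ :=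
  (∑ u : V, ∑ v : V, (1 : ℝ) / (G.dist u v)) / 2

/-- The graph `K(n-1, r)` on `n` vertices: a complete graph `K_{n-1}` on the first
`n - 1` vertices, together with one extra vertex (the last one) joined to exactly the
first `r` vertices of the `K_{n-1}`. -/
def Knr (n r : ℕ) : SimpleGraph (Fin n) :=
  SimpleGraph.fromRel (fun a b =>
    ((a : ℕ) < n - 1 ∧ (b : ℕ) < n - 1) ∨ ((a : ℕ) = n - 1 ∧ (b : ℕ) < r))

/-- The edge connectivity of `G`: the least number of edges whose deletion yields a
disconnected graph or a single vertex. -/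
noncomputable def edgeConnectivity {V : Type*} [Fintype V] (G : SimpleGraph V) : ℕ :=
  sInf {k | ∃ E : Set (Sym2 V), E ⊆ G.edgeSet ∧ E.ncard = k ∧
    (¬ (G.deleteEdges E).Connected ∨ Fintype.card V = 1)}


section Nat
lemma nat_add_le_mul (a b : ℕ) (ha : 1 ≤ a) (hb : 1 ≤ b) : a + b ≤ a * b + 1 := by
  obtain ⟨c, rfl⟩ := Nat.exists_eq_add_of_le ha
  obtain ⟨d, rfl⟩ := Nat.exists_eq_add_of_le hb
  have : (1 + c) * (1 + d) = 1 + c + d + c * d := by ring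
  omega

lemma nat_eq_one_or (a n : ℕ) (h1 : 1 ≤ a) (h2 : a ≤ n - 1) (h3 : 3 ≤ n)
    (h : a * (n - a) = n - 1) : a = 1 ∨ a = n - 1 := by
  by_contra hcon
  push_neg at hcon
  have ha2 : 2 ≤ a := by omega
  have ha3 : a ≤ n - 2 := by omega
  obtain ⟨c, hc⟩ := Nat.exists_eq_add_of_le ha2
  have hd : n - a = (n - a - 2) + 2 := by omega
  set d := n - a - 2 with hdd
  have hexp : (2 + c) * (d + 2) = c * d + 2 * c + 2 * d + 4 := by ring
  have hn : a + (n - a) = n := by omega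
  rw [hd] at h; rw [hc] at h
  rw [hexp] at h
  omega
end Nat

section DistHelpers
variable {V : Type*} {G : SimpleGraph V}

lemma inv_dist_le_one (u v : V) : (1 : ℝ) / (G.dist u v) ≤ 1 := by
  rcases Nat.eq_zero_or_pos (G.dist u v) with h | h
  · simp [h]
  · rw [div_le_one (by exact_mod_cast h)]
    exact_mod_cast h

lemma inv_dist_le_half {u v : V} (hne : u ≠ v) (hadj : ¬ G.Adj u v) :
    (1 : ℝ) / (G.dist u v) ≤ 1 / 2 := by
  have h1 : G.dist u v ≠ 1 := fun h => hadj ((SimpleGraph.dist_eq_one_iff_adj).1 h)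
  rcases Nat.eq_zero_or_pos (G.dist u v) with h | h
  · simp [h]
  · have h2 : 2 ≤ G.dist u v := by omega
    apply one_div_le_one_div_of_le (by norm_num)
    exact_mod_cast h2

lemma dist_eq_one_of_inv_eq_one {u v : V} (h : (1 : ℝ) / (G.dist u v) = 1) :
    G.Adj u v := by
  rw [← SimpleGraph.dist_eq_one_iff_adj]
  rcases Nat.eq_zero_or_pos (G.dist u v) with h0 | h0
  · rw [h0] at h; norm_num at h
  · have : ((G.dist u v : ℝ)) ≠ 0 := by positivity
    field_simp at h
    exact_mod_cast h.symm

lemma iso_dist_le {W : Type*} {G' : SimpleGraph W} (φ : G ≃g G') (u v : V) :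
    G'.dist (φ u) (φ v) ≤ G.dist u v := by
  by_cases h : G.Reachable u v
  · obtain ⟨p, hp⟩ := h.exists_walk_length_eq_dist
    calc G'.dist (φ u) (φ v) ≤ (p.map φ.toHom).length := SimpleGraph.dist_le _
      _ = G.dist u v := by rw [SimpleGraph.Walk.length_map, hp]
  · have h' : ¬ G'.Reachable (φ u) (φ v) := by
      intro hr
      exact h (by simpa using hr.map φ.symm.toHom)
    rw [SimpleGraph.dist_eq_zero_of_not_reachable h,
        SimpleGraph.dist_eq_zero_of_not_reachable h']

lemma iso_dist_eq {W : Type*} {G' : SimpleGraph W} (φ : G ≃g G') (u v : V) :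
    G'.dist (φ u) (φ v) = G.dist u v := by
  refine le_antisymm (iso_dist_le φ u v) ?_
  have := iso_dist_le φ.symm (φ u) (φ v)
  simpa using this

end DistHelpers

lemma harary_iso {V W : Type*} [Fintype V] [Fintype W] {G : SimpleGraph V}
    {G' : SimpleGraph W} (φ : G ≃g G') : hararyIndex G = hararyIndex G' := by
  unfold hararyIndex
  congr 1
  refine Fintype.sum_equiv φ.toEquiv _ _ (fun u => ?_)
  refine Fintype.sum_equiv φ.toEquiv _ _ (fun v => ?_)
  rw [show G'.dist (φ.toEquiv u) (φ.toEquiv v) = G.dist u v from iso_dist_eq φ u v]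


lemma knr_adj (n r : ℕ) (a b : Fin n) :
    (Knr n r).Adj a b ↔ a ≠ b ∧
      (((a : ℕ) < n - 1 ∧ (b : ℕ) < n - 1) ∨ ((a : ℕ) = n - 1 ∧ (b : ℕ) < r) ∨
        ((b : ℕ) = n - 1 ∧ (a : ℕ) < r)) := by
  rw [Knr, SimpleGraph.fromRel_adj]
  constructor
  · rintro ⟨h, h2 | h2⟩ <;> tauto
  · rintro ⟨h, h2⟩ ; tauto

lemma knr_nonadj (n r : ℕ) (hr : 1 ≤ r) (hrn : r + 2 ≤ n) (a b : Fin n) :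
    (a ≠ b ∧ ¬ (Knr n r).Adj a b) ↔
      (((a : ℕ) = n - 1 ∧ r ≤ (b : ℕ) ∧ (b : ℕ) < n - 1) ∨
       ((b : ℕ) = n - 1 ∧ r ≤ (a : ℕ) ∧ (a : ℕ) < n - 1)) := by
  have hab : a ≠ b ↔ (a : ℕ) ≠ (b : ℕ) := by
    simp [Fin.ext_iff]
  have ha := a.isLt
  have hb := b.isLt
  rw [knr_adj, hab]
  constructor
  · rintro ⟨h1, h2⟩
    push_neg at h2
    have := h2 h1
    omega
  · intro h
    constructor
    · omega
    · rintro ⟨-, h2⟩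
      omega

lemma knr_dist_two (n r : ℕ) (hr : 1 ≤ r) (hrn : r + 2 ≤ n) (a b : Fin n)
    (hne : a ≠ b) (hadj : ¬ (Knr n r).Adj a b) : (Knr n r).dist a b = 2 := by
  have h := (knr_nonadj n r hr hrn a b).1 ⟨hne, hadj⟩
  have hc : ∃ c : Fin n, (Knr n r).Adj a c ∧ (Knr n r).Adj c b := by
    refine ⟨⟨0, by omega⟩, ?_, ?_⟩ <;> rw [knr_adj] <;>
      constructor
    · intro hh; rw [Fin.ext_iff] at hh; simp at hh; omega
    · simp; omega
    · intro hh; rw [Fin.ext_iff] at hh; simp at hh; omega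
    · simp; omega
  obtain ⟨c, h1, h2⟩ := hc
  have hw : (Knr n r).dist a b ≤ 2 := by
    have := SimpleGraph.dist_le ((h1.toWalk.append h2.toWalk))
    simpa using this
  have hr0 : (Knr n r).Reachable a b := ⟨h1.toWalk.append h2.toWalk⟩
  have hpos : 0 < (Knr n r).dist a b := hr0.pos_dist_of_ne hne
  have h1' : (Knr n r).dist a b ≠ 1 := fun hh => hadj (SimpleGraph.dist_eq_one_iff_adj.1 hh)
  omega

lemma sum_ind_range (n r : ℕ) :
    ∑ b : Fin n, (if r ≤ (b : ℕ) ∧ (b : ℕ) < n - 1 then (1 : ℝ) else 0)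
      = ((n - 1 - r : ℕ) : ℝ) := by
  rw [Fin.sum_univ_eq_sum_range (fun i => if r ≤ i ∧ i < n - 1 then (1 : ℝ) else 0) n]
  rw [Finset.sum_boole]
  have : (Finset.range n).filter (fun i => r ≤ i ∧ i < n - 1) = Finset.Ico r (n-1) := by
    ext i
    simp only [Finset.mem_filter, Finset.mem_range, Finset.mem_Ico]
    omega
  rw [this, Nat.card_Ico]

lemma sum_ind_last (n : ℕ) (hn : 1 ≤ n) :
    ∑ a : Fin n, (if (a : ℕ) = n - 1 then (1 : ℝ) else 0) = 1 := by
  rw [Fin.sum_univ_eq_sum_range (fun i => if i = n - 1 then (1 : ℝ) else 0) n]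
  rw [Finset.sum_boole]
  have : (Finset.range n).filter (fun i => i = n - 1) = {n - 1} := by
    ext i
    simp only [Finset.mem_filter, Finset.mem_range, Finset.mem_singleton]
    omega
  rw [this]
  simp

lemma sum_ite_ne (V : Type*) [Fintype V] [DecidableEq V] :
    ∑ u : V, ∑ v : V, (if u = v then (0:ℝ) else 1)
      = (Fintype.card V : ℝ) * (Fintype.card V) - Fintype.card V := by
  have : ∀ u : V, ∑ v : V, (if u = v then (0:ℝ) else 1)
      = (Fintype.card V : ℝ) - 1 := by
    intro u
    have : ∑ v : V, (if u = v then (0:ℝ) else 1)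
        = ∑ v : V, (1 - if u = v then (1:ℝ) else 0) := by
      apply Finset.sum_congr rfl
      intro v _
      split_ifs <;> ring
    rw [this, Finset.sum_sub_distrib, Finset.sum_const, Finset.sum_ite_eq]
    simp [Finset.card_univ]
  rw [Finset.sum_congr rfl (fun u _ => this u), Finset.sum_const]
  simp [Finset.card_univ, mul_sub]

lemma harary_knr (n r : ℕ) (hr : 1 ≤ r) (hrn : r + 2 ≤ n) :
    2 * hararyIndex (Knr n r) = n * n - n - ((n - 1 - r : ℕ) : ℝ) := by
  have key : ∀ a b : Fin n, (1 : ℝ) / ((Knr n r).dist a b) =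
      (if a = b then (0:ℝ) else 1)
      - (if (a : ℕ) = n - 1 ∧ r ≤ (b : ℕ) ∧ (b : ℕ) < n - 1 then (1/2 : ℝ) else 0)
      - (if (b : ℕ) = n - 1 ∧ r ≤ (a : ℕ) ∧ (a : ℕ) < n - 1 then (1/2 : ℝ) else 0) := by
    intro a b
    by_cases hab : a = b
    · subst hab
      rw [SimpleGraph.dist_self]
      have h1 : ¬((a : ℕ) = n - 1 ∧ r ≤ (a : ℕ) ∧ (a : ℕ) < n - 1) := by omega
      simp [h1]
    · by_cases hadj : (Knr n r).Adj a b
      · have hno : ¬(((a : ℕ) = n - 1 ∧ r ≤ (b : ℕ) ∧ (b : ℕ) < n - 1) ∨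
            ((b : ℕ) = n - 1 ∧ r ≤ (a : ℕ) ∧ (a : ℕ) < n - 1)) := by
          intro h
          exact ((knr_nonadj n r hr hrn a b).2 h).2 hadj
        push_neg at hno
        have h1 : ¬((a : ℕ) = n - 1 ∧ r ≤ (b : ℕ) ∧ (b : ℕ) < n - 1) := by
          rintro ⟨x, y, z⟩; have := hno.1 x y; omega
        have h2 : ¬((b : ℕ) = n - 1 ∧ r ≤ (a : ℕ) ∧ (a : ℕ) < n - 1) := by
          rintro ⟨x, y, z⟩; have := hno.2 x y; omega
        rw [SimpleGraph.dist_eq_one_iff_adj.2 hadj]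
        simp [hab, h1, h2]
      · rw [knr_dist_two n r hr hrn a b hab hadj]
        rcases (knr_nonadj n r hr hrn a b).1 ⟨hab, hadj⟩ with h | h
        · have h2 : ¬((b : ℕ) = n - 1 ∧ r ≤ (a : ℕ) ∧ (a : ℕ) < n - 1) := by omega
          simp [hab, h, h2]
          norm_num
        · have h2 : ¬((a : ℕ) = n - 1 ∧ r ≤ (b : ℕ) ∧ (b : ℕ) < n - 1) := by omega
          simp [hab, h, h2]
          norm_num
  have hsplit : ∑ a : Fin n, ∑ b : Fin n, (1 : ℝ) / ((Knr n r).dist a b)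
      = (∑ a : Fin n, ∑ b : Fin n, (if a = b then (0:ℝ) else 1))
      - (∑ a : Fin n, ∑ b : Fin n,
          (if (a : ℕ) = n - 1 ∧ r ≤ (b : ℕ) ∧ (b : ℕ) < n - 1 then (1/2 : ℝ) else 0))
      - (∑ a : Fin n, ∑ b : Fin n,
          (if (b : ℕ) = n - 1 ∧ r ≤ (a : ℕ) ∧ (a : ℕ) < n - 1 then (1/2 : ℝ) else 0)) := by
    rw [← Finset.sum_sub_distrib, ← Finset.sum_sub_distrib]
    apply Finset.sum_congr rfl; intro a _
    rw [← Finset.sum_sub_distrib, ← Finset.sum_sub_distrib]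
    exact Finset.sum_congr rfl (fun b _ => key a b)
  have hY : ∑ a : Fin n, ∑ b : Fin n,
      (if (a : ℕ) = n - 1 ∧ r ≤ (b : ℕ) ∧ (b : ℕ) < n - 1 then (1/2 : ℝ) else 0)
      = ((n - 1 - r : ℕ) : ℝ) / 2 := by
    have hpt : ∀ a b : Fin n,
        (if (a : ℕ) = n - 1 ∧ r ≤ (b : ℕ) ∧ (b : ℕ) < n - 1 then (1/2 : ℝ) else 0)
        = (if (a : ℕ) = n - 1 then (1:ℝ) else 0) *
          ((if r ≤ (b : ℕ) ∧ (b : ℕ) < n - 1 then (1 : ℝ) else 0) / 2) := by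
      intro a b; split_ifs <;> simp_all <;> ring
    calc ∑ a : Fin n, ∑ b : Fin n,
        (if (a : ℕ) = n - 1 ∧ r ≤ (b : ℕ) ∧ (b : ℕ) < n - 1 then (1/2 : ℝ) else 0)
        = ∑ a : Fin n, (if (a : ℕ) = n - 1 then (1:ℝ) else 0) *
            (∑ b : Fin n, (if r ≤ (b : ℕ) ∧ (b : ℕ) < n - 1 then (1 : ℝ) else 0)) / 2 := by
          apply Finset.sum_congr rfl; intro a _
          rw [Finset.sum_congr rfl (fun b _ => hpt a b), ← Finset.mul_sum, ← Finset.sum_div]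
          ring
      _ = ((n - 1 - r : ℕ) : ℝ) / 2 := by
          rw [← Finset.sum_div, ← Finset.sum_mul, sum_ind_last n (by omega), sum_ind_range n r]
          ring
  have hZ : ∑ a : Fin n, ∑ b : Fin n,
      (if (b : ℕ) = n - 1 ∧ r ≤ (a : ℕ) ∧ (a : ℕ) < n - 1 then (1/2 : ℝ) else 0)
      = ((n - 1 - r : ℕ) : ℝ) / 2 := by
    rw [Finset.sum_comm]
    exact hY
  have hcard : Fintype.card (Fin n) = n := Fintype.card_fin n
  have hB := sum_ite_ne (Fin n)
  rw [hcard] at hB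
  unfold hararyIndex
  rw [hsplit, hB, hY, hZ]
  ring


lemma build_iso {V : Type*} [Fintype V] (G : SimpleGraph V) [DecidableRel G.Adj] (n r : ℕ)
    (hr : 1 ≤ r) (hrn : r + 2 ≤ n) (hcard : Fintype.card V = n) (x₀ : V)
    (hdeg : G.degree x₀ = r)
    (hcomp : ∀ u v : V, u ≠ x₀ → v ≠ x₀ → u ≠ v → G.Adj u v) :
    Nonempty (G ≃g Knr n r) := by
  classical
  set N : Finset V := G.neighborFinset x₀ with hN
  have hNcard : N.card = r := hdeg
  have hx₀N : x₀ ∉ N := SimpleGraph.notMem_neighborFinset_self G x₀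
  set M : Finset V := Finset.univ \ insert x₀ N with hM
  have hMcard : M.card = n - 1 - r := by
    rw [hM, Finset.card_sdiff_of_subset (Finset.subset_univ _), Finset.card_insert_of_notMem hx₀N,
      hNcard, Finset.card_univ, hcard]
    omega
  have hx₀M : x₀ ∉ M := by simp [hM]
  set e₁ := N.equivFinOfCardEq hNcard with he₁
  set e₂ := M.equivFinOfCardEq hMcard with he₂
  have hn3 : 3 ≤ n := by omega
  -- the map
  set f : V → Fin n := fun x =>
    if hx : x = x₀ then ⟨n - 1, by omega⟩
    else if hxN : x ∈ N then ⟨(e₁ ⟨x, hxN⟩ : ℕ), by have := (e₁ ⟨x, hxN⟩).isLt; omega⟩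
    else ⟨r + (e₂ ⟨x, by simp [hM, hx, hxN]⟩ : ℕ), by
      have := (e₂ ⟨x, by simp [hM, hx, hxN]⟩).isLt; omega⟩ with hf
  have hfx₀ : (f x₀ : ℕ) = n - 1 := by simp [hf]
  have hfN : ∀ x (hx : x ∈ N), (f x : ℕ) = (e₁ ⟨x, hx⟩ : ℕ) := by
    intro x hx
    have hxx : x ≠ x₀ := fun h => hx₀N (h ▸ hx)
    simp [hf, hxx, hx]
  have hfM : ∀ x (hx1 : x ≠ x₀) (hx2 : x ∉ N),
      (f x : ℕ) = r + (e₂ ⟨x, by simp [hM, hx1, hx2]⟩ : ℕ) := by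
    intro x hx1 hx2
    simp [hf, hx1, hx2]
  have hlowN : ∀ x (hx : x ∈ N), (f x : ℕ) < r := by
    intro x hx; rw [hfN x hx]; exact (e₁ ⟨x, hx⟩).isLt
  have hmidM : ∀ x (hx1 : x ≠ x₀) (hx2 : x ∉ N), r ≤ (f x : ℕ) ∧ (f x : ℕ) < n - 1 := by
    intro x hx1 hx2
    rw [hfM x hx1 hx2]
    have := (e₂ ⟨x, by simp [hM, hx1, hx2]⟩).isLt
    omega
  have hlt : ∀ x, x ≠ x₀ → (f x : ℕ) < n - 1 := by
    intro x hx
    by_cases hxN : x ∈ N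
    · have := hlowN x hxN; omega
    · exact (hmidM x hx hxN).2
  have hinj : Function.Injective f := by
    intro x y hxy
    by_cases hx : x = x₀ <;> by_cases hy : y = x₀
    · rw [hx, hy]
    · exfalso; have := hlt y hy; rw [← hxy] at this; rw [hx] at this; rw [hfx₀] at this; omega
    · exfalso; have := hlt x hx; rw [hxy] at this; rw [hy] at this; rw [hfx₀] at this; omega
    · by_cases hxN : x ∈ N <;> by_cases hyN : y ∈ N
      · have h1 := hfN x hxN; have h2 := hfN y hyN
        have : (e₁ ⟨x, hxN⟩ : ℕ) = (e₁ ⟨y, hyN⟩ : ℕ) := by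
          rw [← h1, ← h2, hxy]
        have := e₁.injective (Fin.ext this)
        exact Subtype.mk_eq_mk.1 this
      · exfalso
        have h1 := hlowN x hxN
        have h2 := (hmidM y hy hyN).1
        rw [hxy] at h1; omega
      · exfalso
        have h1 := hlowN y hyN
        have h2 := (hmidM x hx hxN).1
        rw [hxy] at h2; omega
      · have h1 := hfM x hx hxN; have h2 := hfM y hy hyN
        have : (e₂ ⟨x, by simp [hM, hx, hxN]⟩ : ℕ) = (e₂ ⟨y, by simp [hM, hy, hyN]⟩ : ℕ) := by
          have := h1.symm.trans ((congrArg (fun z : Fin n => (z : ℕ)) hxy).trans h2)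
          omega
        have := e₂.injective (Fin.ext this)
        exact Subtype.mk_eq_mk.1 this
  have hbij : Function.Bijective f := by
    rw [Fintype.bijective_iff_injective_and_card]
    exact ⟨hinj, by simp [hcard]⟩
  set φ := Equiv.ofBijective f hbij with hφ
  -- adjacency transfer
  have hadj_x₀ : ∀ v : V, v ≠ x₀ → ((Knr n r).Adj (f x₀) (f v) ↔ G.Adj x₀ v) := by
    intro v hv
    rw [knr_adj]
    have hfv := hlt v hv
    have hne : f x₀ ≠ f v := fun h => hv (hinj h).symm
    constructor
    · rintro ⟨-, h | h | h⟩
      · exfalso; rw [hfx₀] at h; omega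
      · -- f v < r, so v ∈ N
        by_cases hvN : v ∈ N
        · exact (SimpleGraph.mem_neighborFinset G x₀ v).1 hvN
        · exfalso; have := (hmidM v hv hvN).1; omega
      · exfalso; rw [hfx₀] at h; omega
    · intro h
      have hvN : v ∈ N := (SimpleGraph.mem_neighborFinset G x₀ v).2 h
      exact ⟨hne, Or.inr (Or.inl ⟨hfx₀, hlowN v hvN⟩)⟩
  have hadj : ∀ u v : V, (Knr n r).Adj (f u) (f v) ↔ G.Adj u v := by
    intro u v
    by_cases huv : u = v
    · subst huv
      simp [SimpleGraph.irrefl]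
    · by_cases hu : u = x₀
      · subst hu
        exact hadj_x₀ v (fun h => huv h.symm)
      · by_cases hv : v = x₀
        · subst hv
          exact ⟨fun h => ((hadj_x₀ u hu).1 h.symm).symm,
            fun h => ((hadj_x₀ u hu).2 h.symm).symm⟩
        · have hG : G.Adj u v := hcomp u v hu hv huv
          have hKnr : (Knr n r).Adj (f u) (f v) := by
            rw [knr_adj]
            exact ⟨fun h => huv (hinj h), Or.inl ⟨hlt u hu, hlt v hv⟩⟩
          simp [hG, hKnr]
  exact ⟨⟨φ, by intro u v; exact hadj u v⟩⟩


set_option maxHeartbeats 2000000 in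
/-- For `1 ≤ r ≤ n − 2`, `K(n−1, r)` is the unique maximizer of the Harary index among
graphs of order `n` with edge connectivity `r`. -/
theorem harary_le_Knr_of_edgeConnectivity (n r : ℕ) (hr : 1 ≤ r) (hrn : r + 2 ≤ n)
    {V : Type*} [Fintype V] (G : SimpleGraph V) (hcard : Fintype.card V = n)
    (hconn : edgeConnectivity G = r) :
    hararyIndex G ≤ hararyIndex (Knr n r) ∧
      (hararyIndex G = hararyIndex (Knr n r) ↔ Nonempty (G ≃g Knr n r)) := by
  classical
  have hn3 : 3 ≤ n := by omega
  have hV : Nonempty V := by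
    rw [← Fintype.card_pos_iff, hcard]; omega
  -- extract a minimum edge cut of size r
  have hSne : {k | ∃ E : Set (Sym2 V), E ⊆ G.edgeSet ∧ E.ncard = k ∧
      (¬ (G.deleteEdges E).Connected ∨ Fintype.card V = 1)}.Nonempty := by
    by_contra h
    rw [Set.not_nonempty_iff_eq_empty] at h
    unfold edgeConnectivity at hconn
    rw [h, Nat.sInf_empty] at hconn
    omega
  have hmem := Nat.sInf_mem hSne
  rw [show sInf _ = edgeConnectivity G from rfl, hconn] at hmem
  obtain ⟨E, hEsub, hEcard, hEdisc⟩ := hmem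
  have hdisc : ¬ (G.deleteEdges E).Connected := by
    rcases hEdisc with h | h
    · exact h
    · omega
  set H' := G.deleteEdges E with hH'
  have hpre : ¬ H'.Preconnected := fun h => hdisc ⟨h⟩
  have hreach : ∃ u v : V, ¬ H'.Reachable u v := by
    by_contra h
    push_neg at h
    exact hpre (fun u v => h u v)
  obtain ⟨u₀, v₀, hreach⟩ := hreach
  set A : Finset V := Finset.univ.filter (fun x => H'.Reachable u₀ x) with hA
  have hu₀A : u₀ ∈ A := by
    simp only [hA, Finset.mem_filter, Finset.mem_univ, true_and]
    exact SimpleGraph.Reachable.refl u₀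
  have hv₀A : v₀ ∉ A := by simp [hA]; exact hreach
  set cross : V → V → Prop := fun u v => ¬(u ∈ A ↔ v ∈ A) with hcrossdef
  have hcross_irr : ∀ u : V, ¬ cross u u := by intro u h; exact h Iff.rfl
  have hcutE : ∀ u v : V, cross u v → G.Adj u v → s(u, v) ∈ E := by
    have key : ∀ u v : V, u ∈ A → v ∉ A → G.Adj u v → s(u, v) ∈ E := by
      intro u v hu hv hadj
      by_contra hE
      have hadj' : H'.Adj u v := by
        rw [hH', SimpleGraph.deleteEdges_adj]
        exact ⟨hadj, hE⟩
      rw [hA] at hu hv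
      simp only [Finset.mem_filter, Finset.mem_univ, true_and] at hu hv
      exact hv (hu.trans hadj'.toWalk.reachable)
    intro u v hcr hadj
    rw [hcrossdef] at hcr
    by_cases hu : u ∈ A
    · have hv : v ∉ A := fun hv => hcr ⟨fun _ => hv, fun _ => hu⟩
      exact key u v hu hv hadj
    · have hv : v ∈ A := by
        by_contra hv
        exact hcr ⟨fun h => absurd h hu, fun h => absurd h hv⟩
      rw [Sym2.eq_swap]
      exact key v u hv hu hadj.symm
  -- counting
  set Pcross : Finset (V × V) := Finset.univ.filter (fun p => cross p.1 p.2) with hPcross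
  set Pca : Finset (V × V) :=
    Finset.univ.filter (fun p => cross p.1 p.2 ∧ G.Adj p.1 p.2) with hPca
  set Pcn : Finset (V × V) :=
    Finset.univ.filter (fun p => cross p.1 p.2 ∧ ¬ G.Adj p.1 p.2) with hPcn
  set a := A.card with ha
  have ha1 : 1 ≤ a := Finset.card_pos.2 ⟨u₀, hu₀A⟩
  have han : a ≤ n - 1 := by
    have h1 : a ≤ n := by rw [ha, ← hcard, ← Finset.card_univ]; exact Finset.card_le_univ A
    have h2 : a ≠ n := by
      intro h
      have : A = Finset.univ := Finset.eq_univ_of_card A (by rw [← ha, h, ← hcard])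
      exact hv₀A (this ▸ Finset.mem_univ v₀)
    omega
  have hsum_cross : Pca.card + Pcn.card = 2 * (a * (n - a)) := by
    have h1 : Pca = Pcross.filter (fun p => G.Adj p.1 p.2) := by
      rw [hPca, hPcross, Finset.filter_filter]
    have h2 : Pcn = Pcross.filter (fun p => ¬ G.Adj p.1 p.2) := by
      rw [hPcn, hPcross, Finset.filter_filter]
    have h3 : Pca.card + Pcn.card = Pcross.card := by
      rw [h1, h2]
      exact Finset.card_filter_add_card_filter_not _
    have h4 : Pcross = (A ×ˢ (Finset.univ \ A)) ∪ ((Finset.univ \ A) ×ˢ A) := by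
      ext p
      simp only [hPcross, Finset.mem_filter, Finset.mem_univ, true_and, Finset.mem_union,
        Finset.mem_product, Finset.mem_sdiff, hcrossdef]
      tauto
    have h5 : Disjoint (A ×ˢ (Finset.univ \ A)) ((Finset.univ \ A) ×ˢ A) := by
      rw [Finset.disjoint_left]
      intro p hp hq
      rw [Finset.mem_product, Finset.mem_sdiff] at hp hq
      exact hq.1.2 hp.1
    have h6 : (Finset.univ \ A).card = n - a := by
      rw [Finset.card_sdiff_of_subset (Finset.subset_univ A), Finset.card_univ, hcard, ha]
    rw [h3, h4, Finset.card_union_of_disjoint h5, Finset.card_product, Finset.card_product,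
      h6, ← ha]
    ring
  have hca_le : Pca.card ≤ 2 * r := by
    set F : Finset (Sym2 V) := (Set.toFinite E).toFinset with hF
    have hFcard : F.card = r := by
      rw [hF, ← Set.ncard_eq_toFinset_card E (Set.toFinite E), hEcard]
    have := Finset.card_le_card_of_injOn
      (f := fun p : V × V => (s(p.1, p.2), decide (p.1 ∈ A)))
      (s := Pca) (t := F ×ˢ (Finset.univ : Finset Bool))
      (by
        intro p hp
        rw [Finset.mem_coe, hPca, Finset.mem_filter] at hp
        rw [Finset.mem_coe, Finset.mem_product]
        refine ⟨?_, Finset.mem_univ _⟩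
        rw [hF, Set.Finite.mem_toFinset]
        exact hcutE p.1 p.2 hp.2.1 hp.2.2)
      (by
        intro p hp q hq hpq
        rw [Finset.mem_coe, Finset.mem_filter] at hp hq
        simp only [Prod.mk.injEq] at hpq
        obtain ⟨hs, hb⟩ := hpq
        rw [Sym2.eq_iff] at hs
        rcases hs with ⟨h1, h2⟩ | ⟨h1, h2⟩
        · exact Prod.ext h1 h2
        · exfalso
          have hbb : (p.1 ∈ A) ↔ (q.1 ∈ A) := by
            rw [← decide_eq_decide]; exact hb
          have hcr := hp.2.1
          rw [hcrossdef] at hcr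
          rw [← h2] at hbb
          exact hcr hbb)
    calc Pca.card ≤ (F ×ˢ (Finset.univ : Finset Bool)).card := this
      _ = 2 * r := by
          rw [Finset.card_product, hFcard]
          simp [Fintype.card_bool]; ring
  have hprod_ge : n - 1 ≤ a * (n - a) := by
    have := nat_add_le_mul a (n - a) ha1 (by omega)
    omega
  have hpcn_ge : 2 * (n - 1 - r) ≤ Pcn.card := by
    set x := a * (n - a) with hx
    omega
  -- real-valued sums
  set S : ℝ := ∑ p : V × V, (1 : ℝ) / (G.dist p.1 p.2) with hS
  have hSH : 2 * hararyIndex G = S := by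
    rw [hS, Fintype.sum_prod_type]
    unfold hararyIndex
    ring
  set gfun : V × V → ℝ := fun p =>
    (if p.1 = p.2 then (0:ℝ) else 1)
      - (1/2) * (if cross p.1 p.2 ∧ ¬ G.Adj p.1 p.2 then (1:ℝ) else 0) with hgfun
  have hfg : ∀ p : V × V, (1 : ℝ) / (G.dist p.1 p.2) ≤ gfun p := by
    intro p
    simp only [hgfun]
    by_cases h1 : p.1 = p.2
    · have : ¬ (cross p.1 p.2 ∧ ¬ G.Adj p.1 p.2) := by
        rw [h1]; rintro ⟨h, -⟩; exact hcross_irr p.2 h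
      rw [if_pos h1, if_neg this, h1, SimpleGraph.dist_self]
      simp
    · by_cases h2 : cross p.1 p.2 ∧ ¬ G.Adj p.1 p.2
      · have := inv_dist_le_half (G := G) h1 h2.2
        simp only [if_neg h1, if_pos h2]
        linarith
      · have := inv_dist_le_one (G := G) p.1 p.2
        simp only [if_neg h1, if_neg h2]
        linarith
  have hSg : S ≤ ∑ p : V × V, gfun p := by
    rw [hS]
    exact Finset.sum_le_sum (fun p _ => hfg p)
  have hgval : ∑ p : V × V, gfun p = ((n : ℝ) * n - n) - (Pcn.card : ℝ) / 2 := by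
    rw [hgfun]
    rw [Finset.sum_sub_distrib]
    have h1 : ∑ p : V × V, (if p.1 = p.2 then (0:ℝ) else 1) = (n : ℝ) * n - n := by
      rw [Fintype.sum_prod_type]
      rw [sum_ite_ne V, hcard]
    have h2 : ∑ p : V × V, (1/2 : ℝ) * (if cross p.1 p.2 ∧ ¬ G.Adj p.1 p.2 then (1:ℝ) else 0)
        = (Pcn.card : ℝ) / 2 := by
      rw [← Finset.mul_sum, Finset.sum_boole]
      rw [hPcn]
      ring_nf
    rw [h1, h2]
  have hpcn_ge' : ((n - 1 - r : ℕ) : ℝ) ≤ (Pcn.card : ℝ) / 2 := by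
    have h' : ((2 * (n - 1 - r) : ℕ) : ℝ) ≤ ((Pcn.card : ℕ) : ℝ) := Nat.cast_le.mpr hpcn_ge
    push_cast at h'
    linarith
  have hknr := harary_knr n r hr hrn
  have hmain : 2 * hararyIndex G ≤ 2 * hararyIndex (Knr n r) := by
    rw [hSH, hknr]
    have hnn : ((n : ℝ) * n - n) - (Pcn.card : ℝ) / 2
        ≤ (n : ℝ) * n - n - ((n - 1 - r : ℕ) : ℝ) := by linarith
    calc S ≤ ∑ p : V × V, gfun p := hSg
      _ = ((n : ℝ) * n - n) - (Pcn.card : ℝ) / 2 := hgval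
      _ ≤ _ := hnn
  refine ⟨by linarith, ?_, fun h => h.elim (fun φ => harary_iso φ)⟩
  -- equality case
  intro heq
  have heq2 : S = 2 * hararyIndex (Knr n r) := by rw [← hSH, heq]
  have hgB : ∑ p : V × V, gfun p ≤ 2 * hararyIndex (Knr n r) := by
    rw [hgval, hknr]; linarith
  have hSg_eq : S = ∑ p : V × V, gfun p := le_antisymm hSg (by rw [heq2]; exact hgB)
  have hgB_eq : ∑ p : V × V, gfun p = 2 * hararyIndex (Knr n r) :=
    le_antisymm hgB (by rw [← heq2]; exact hSg)
  -- extract Pcn.card = 2 * (n - 1 - r)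
  have hpcn_eq : Pcn.card = 2 * (n - 1 - r) := by
    have : (Pcn.card : ℝ) / 2 = ((n - 1 - r : ℕ) : ℝ) := by
      rw [hgval] at hgB_eq
      rw [hknr] at hgB_eq
      linarith
    have : (Pcn.card : ℝ) = ((2 * (n - 1 - r) : ℕ) : ℝ) := by push_cast; linarith
    exact_mod_cast this
  have hxa : a * (n - a) = n - 1 ∧ Pca.card = 2 * r := by
    set x := a * (n - a) with hx
    omega
  obtain ⟨hx_eq, hpca_eq⟩ := hxa
  -- find the special vertex
  have hx₀ : ∃ x₀ : V, ∀ u v : V, cross u v ↔ ¬((u = x₀) ↔ (v = x₀)) := by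
    rcases nat_eq_one_or a n ha1 han hn3 hx_eq with h | h
    · obtain ⟨x₀, hx₀⟩ := Finset.card_eq_one.1 (show A.card = 1 by rw [← ha]; exact h)
      refine ⟨x₀, fun u v => ?_⟩
      simp only [hcrossdef, hx₀, Finset.mem_singleton]
    · have hcomp_card : (Finset.univ \ A).card = 1 := by
        rw [Finset.card_sdiff_of_subset (Finset.subset_univ A), Finset.card_univ, hcard, ← ha, h]
        omega
      obtain ⟨x₀, hx₀⟩ := Finset.card_eq_one.1 hcomp_card
      refine ⟨x₀, fun u v => ?_⟩
      have hmem : ∀ w : V, w ∈ A ↔ ¬ (w = x₀) := by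
        intro w
        constructor
        · intro hw hwx
          have : w ∈ Finset.univ \ A := hx₀ ▸ (Finset.mem_singleton.2 hwx)
          rw [Finset.mem_sdiff] at this
          exact this.2 hw
        · intro hw
          by_contra hwA
          have : w ∈ Finset.univ \ A := by
            rw [Finset.mem_sdiff]; exact ⟨Finset.mem_univ w, hwA⟩
          rw [hx₀, Finset.mem_singleton] at this
          exact hw this
      simp only [hcrossdef]
      rw [hmem u, hmem v]
      tauto
  obtain ⟨x₀, hx₀cross⟩ := hx₀
  -- pointwise equality
  have hpt : ∀ p : V × V, (1 : ℝ) / (G.dist p.1 p.2) = gfun p := by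
    have := (Finset.sum_eq_sum_iff_of_le (fun p (_ : p ∈ Finset.univ) => hfg p)).1
      (by rw [← hS]; exact hSg_eq)
    exact fun p => this p (Finset.mem_univ p)
  have hcomp : ∀ u v : V, u ≠ x₀ → v ≠ x₀ → u ≠ v → G.Adj u v := by
    intro u v hu hv huv
    have hnc : ¬ cross u v := by
      rw [hx₀cross]
      push_neg
      constructor <;> intro h
      · exact absurd h hu
      · exact absurd h hv
    have := hpt (u, v)
    rw [hgfun] at this
    simp only [if_neg huv] at this
    have hno : ¬ (cross u v ∧ ¬ G.Adj u v) := fun h => hnc h.1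
    rw [if_neg hno] at this
    simp only [mul_zero, sub_zero] at this
    exact dist_eq_one_of_inv_eq_one this
  -- degree of x₀ equals r
  have hdeg : G.degree x₀ = r := by
    have hcount : Pca.card = 2 * G.degree x₀ := by
      rw [hPca, Finset.card_filter, Fintype.sum_prod_type]
      have hpt2 : ∀ u v : V, (if cross u v ∧ G.Adj u v then (1:ℕ) else 0)
          = (if u = x₀ ∧ G.Adj u v then (1:ℕ) else 0)
            + (if v = x₀ ∧ G.Adj u v then (1:ℕ) else 0) := by
        intro u v
        have hcr : cross u v ↔ ¬((u = x₀) ↔ (v = x₀)) := hx₀cross u v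
        by_cases hadj : G.Adj u v
        · have hne : u ≠ v := hadj.ne
          by_cases hu : u = x₀
          · have hv : ¬ v = x₀ := fun h => hne (hu.trans h.symm)
            simp only [hcr]
            simp [hu, hv, hadj]
          · by_cases hv : v = x₀
            · simp only [hcr]
              simp [hu, hv, hadj]
            · simp only [hcr]
              simp [hu, hv, hadj]
        · simp [hadj]
      rw [Finset.sum_congr rfl (fun u _ => Finset.sum_congr rfl (fun v _ => hpt2 u v))]
      rw [Finset.sum_congr rfl (fun u (_ : u ∈ Finset.univ) => Finset.sum_add_distrib)]
      rw [Finset.sum_add_distrib]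
      have hleft : ∑ u : V, ∑ v : V, (if u = x₀ ∧ G.Adj u v then (1:ℕ) else 0)
          = G.degree x₀ := by
        have : ∀ u : V, ∑ v : V, (if u = x₀ ∧ G.Adj u v then (1:ℕ) else 0)
            = if u = x₀ then G.degree x₀ else 0 := by
          intro u
          by_cases hu : u = x₀
          · subst hu
            rw [if_pos rfl]
            rw [SimpleGraph.degree, SimpleGraph.neighborFinset_eq_filter, Finset.card_filter]
            apply Finset.sum_congr rfl
            intro v _
            simp
          · rw [if_neg hu]
            apply Finset.sum_eq_zero
            intro v _
            simp [hu]
        rw [Finset.sum_congr rfl (fun u _ => this u)]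
        rw [Finset.sum_ite_eq' Finset.univ x₀ (fun _ => G.degree x₀)]
        simp
      have hright : ∑ u : V, ∑ v : V, (if v = x₀ ∧ G.Adj u v then (1:ℕ) else 0)
          = G.degree x₀ := by
        rw [Finset.sum_comm]
        have : ∀ v : V, ∑ u : V, (if v = x₀ ∧ G.Adj u v then (1:ℕ) else 0)
            = if v = x₀ then G.degree x₀ else 0 := by
          intro v
          by_cases hv : v = x₀
          · subst hv
            rw [if_pos rfl]
            rw [SimpleGraph.degree, SimpleGraph.neighborFinset_eq_filter, Finset.card_filter]
            apply Finset.sum_congr rfl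
            intro u _
            simp [SimpleGraph.adj_comm]
          · rw [if_neg hv]
            apply Finset.sum_eq_zero
            intro u _
            simp [hv]
        rw [Finset.sum_congr rfl (fun v _ => this v)]
        rw [Finset.sum_ite_eq' Finset.univ x₀ (fun _ => G.degree x₀)]
        simp
      rw [hleft, hright]
      ring
    omega
  exact build_iso G n r hr hrn hcard x₀ hdeg hcomp
end

section
/- Let n ≥ 4 and r = n − 2. Let G be a finite simple graph of order n with vertex connectivity exactly r such that G is not isomorphic to K(n−1,r), and such that H(G′) ≤ H(G) for every graph G′ of order n with vertex connectivity exactly r that is not isomorphic to K(n−1,r) (i.e., G attains the second maximum Harary index among graphs of order n with vertex connectivity r). Then G is isomorphic to the graph obtained from the join K_{n−2} ∨ O_2 of the complete graph K_{n−2} with the empty graph O_2 on two vertices by deleting one edge lying inside K_{n−2}. -/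
open SimpleGraph

/-- The vertex connectivity of `G`: the least number of vertices whose deletion yields
a disconnected graph or a single vertex. -/
noncomputable def vertexConnectivity {V : Type*} [Fintype V] (G : SimpleGraph V) : ℕ :=
  sInf {k | ∃ S : Set V, S.ncard = k ∧
    (¬ (G.induce (Sᶜ : Set V)).Connected ∨ (Sᶜ : Set V).ncard = 1)}

/-- The join `K_{n-2} ∨ O_2` (the complete graph on the first `n - 2` vertices joined
to two independent vertices) with the edge between vertices `0` and `1` of the
`K_{n-2}` deleted. -/
def KO2minusEdge (n : ℕ) : SimpleGraph (Fin n) :=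
  SimpleGraph.fromRel (fun a b =>
    ((a : ℕ) < n - 2 ∧ (b : ℕ) < n - 2 ∧
      ¬ ((a : ℕ) = 0 ∧ (b : ℕ) = 1) ∧ ¬ ((a : ℕ) = 1 ∧ (b : ℕ) = 0)) ∨
    ((a : ℕ) < n - 2 ∧ n - 2 ≤ (b : ℕ)))

section Helpers

set_option linter.unusedSectionVars false

variable {V : Type*} [Fintype V]

/-- The complement of `G` is a (partial) matching: every vertex has at most one non-neighbor. -/
def CompMatching (G : SimpleGraph V) : Prop :=
  ∀ ⦃v u w : V⦄, v ≠ u → v ≠ w → ¬ G.Adj v u → ¬ G.Adj v w → u = w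

lemma induce_not_connected_of_isolated (G : SimpleGraph V) {s : Set V} {v u : V}
    (hv : v ∈ s) (hu : u ∈ s) (hvu : v ≠ u) (hiso : ∀ w ∈ s, ¬ G.Adj v w) :
    ¬ (G.induce s).Connected := by
  intro hc
  obtain ⟨p⟩ := hc.preconnected ⟨v, hv⟩ ⟨u, hu⟩
  cases p with
  | nil => exact hvu rfl
  | cons h q => exact hiso _ (Subtype.mem _) h

lemma induce_connected_of_compMatching {G : SimpleGraph V} (hm : CompMatching G)
    {s : Set V} (hs : 3 ≤ s.ncard) : (G.induce s).Connected := by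
  classical
  have hsne : s.Nonempty := by
    rcases s.eq_empty_or_nonempty with h | h
    · simp [h] at hs
    · exact h
  have : Nonempty s := hsne.to_subtype
  refine ⟨fun x y => ?_⟩
  rcases x with ⟨x, hx⟩; rcases y with ⟨y, hy⟩
  by_cases hxy : x = y
  · subst hxy; rfl
  by_cases hadj : G.Adj x y
  · exact Adj.reachable (by exact hadj)
  have hthird : ∃ c ∈ s, c ≠ x ∧ c ≠ y := by
    by_contra h
    push_neg at h
    have hsub : s ⊆ {x, y} := by
      intro c hc
      by_cases hcx : c = x
      · exact hcx ▸ Set.mem_insert _ _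
      · exact Set.mem_insert_of_mem _ (h c hc hcx)
    have h1 := Set.ncard_le_ncard hsub (Set.toFinite _)
    have h2 : ({x, y} : Set V).ncard ≤ 2 :=
      (Set.ncard_insert_le _ _).trans (by simp)
    omega
  obtain ⟨c, hc, hcx, hcy⟩ := hthird
  have hadj1 : G.Adj x c := by
    by_contra hne
    exact hcy.symm (hm hxy (Ne.symm hcx) hadj hne)
  have hadj2 : G.Adj c y := by
    by_contra hne
    have := hm (Ne.symm hxy) (Ne.symm hcy) (fun h => hadj h.symm) fun h => hne h.symm
    exact hcx this.symm
  have r1 : (G.induce s).Reachable ⟨x, hx⟩ ⟨c, hc⟩ := Adj.reachable (by exact hadj1)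
  have r2 : (G.induce s).Reachable ⟨c, hc⟩ ⟨y, hy⟩ := Adj.reachable (by exact hadj2)
  exact r1.trans r2

lemma induce_pair_connected {G : SimpleGraph V} {u v : V} (h : G.Adj u v) :
    (G.induce {u, v}).Connected := by
  have hne : Nonempty ({u, v} : Set V) := ⟨⟨u, by simp⟩⟩
  refine ⟨fun a b => ?_⟩
  obtain ⟨a, ha⟩ := a; obtain ⟨b, hb⟩ := b
  have r : (G.induce {u, v}).Reachable ⟨u, by simp⟩ ⟨v, by simp⟩ :=
    Adj.reachable (by exact h)
  simp only [Set.mem_insert_iff, Set.mem_singleton_iff] at ha hb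
  rcases ha with rfl | rfl <;> rcases hb with rfl | rfl
  · rfl
  · exact r
  · exact r.symm
  · rfl

lemma dist_eq_two_of_compMatching {G : SimpleGraph V} (hm : CompMatching G)
    (hcard : 3 ≤ Fintype.card V) {u v : V} (huv : u ≠ v) (hadj : ¬ G.Adj u v) :
    G.dist u v = 2 := by
  classical
  have hthird : ∃ c : V, c ≠ u ∧ c ≠ v := by
    by_contra h
    push_neg at h
    have hsub : (Finset.univ : Finset V) ⊆ {u, v} := by
      intro c _
      by_cases hcu : c = u
      · simp [hcu]
      · simp [h c hcu]
    have h1 := Finset.card_le_card hsub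
    have h2 : ({u, v} : Finset V).card ≤ 2 :=
      (Finset.card_insert_le _ _).trans (by simp)
    rw [Finset.card_univ] at h1
    omega
  obtain ⟨c, hcu, hcv⟩ := hthird
  have h1 : G.Adj u c := by
    by_contra hne
    exact hcv (hm huv (Ne.symm hcu) hadj hne).symm
  have h2 : G.Adj c v := by
    by_contra hne
    have := hm (Ne.symm huv) (Ne.symm hcv) (fun h => hadj h.symm) fun h => hne h.symm
    exact hcu this.symm
  have hw : G.dist u v ≤ 2 := by
    have := SimpleGraph.dist_le (SimpleGraph.Walk.cons h1 (SimpleGraph.Walk.cons h2 SimpleGraph.Walk.nil))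
    simpa using this
  have h0 : G.dist u v ≠ 0 := by
    intro h
    rw [SimpleGraph.dist_eq_zero_iff_eq_or_not_reachable] at h
    rcases h with h | h
    · exact huv h
    · exact h (h1.reachable.trans h2.reachable)
  have hne1 : G.dist u v ≠ 1 := fun h => hadj (SimpleGraph.dist_eq_one_iff_adj.mp h)
  omega

lemma harary_formula {V : Type*} [Fintype V] {n : ℕ} (hn : 4 ≤ n) (hcard : Fintype.card V = n)
    {G : SimpleGraph V} (hm : CompMatching G) :
    hararyIndex G =
      ((n : ℝ) * ((n : ℝ) - 1) - ({u : V | ∃ v, u ≠ v ∧ ¬ G.Adj u v}.ncard : ℝ) / 2) / 2 := by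
  classical
  have hc3 : 3 ≤ Fintype.card V := by omega
  have key : ∀ u : V, ∑ v : V, (1 : ℝ) / (G.dist u v) =
      ((n : ℝ) - 1) - (if u ∈ {u : V | ∃ v, u ≠ v ∧ ¬ G.Adj u v} then (1 : ℝ) / 2 else 0) := by
    intro u
    by_cases hu : ∃ v, u ≠ v ∧ ¬ G.Adj u v
    · obtain ⟨p, hup, hnadj⟩ := hu
      have hterm : ∀ v : V, (1 : ℝ) / (G.dist u v) =
          (1 - (if v = u then (1 : ℝ) else 0)) - (if v = p then (1 : ℝ) / 2 else 0) := by
        intro v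
        by_cases hvu : v = u
        · subst hvu
          rw [SimpleGraph.dist_self]
          simp [if_neg (fun h : v = p => hup (h ▸ rfl))]
        · by_cases hvp : v = p
          · subst hvp
            rw [dist_eq_two_of_compMatching hm hc3 hup hnadj]
            norm_num [if_neg hvu]
          · have hadj : G.Adj u v := by
              by_contra hne
              exact hvp (hm hup (fun h => hvu h.symm) hnadj hne).symm
            rw [SimpleGraph.dist_eq_one_iff_adj.mpr hadj]
            simp [hvu, hvp]
      rw [Finset.sum_congr rfl (fun v _ => hterm v)]
      rw [Finset.sum_sub_distrib, Finset.sum_sub_distrib]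
      rw [Finset.sum_const, Finset.sum_ite_eq' Finset.univ u (fun _ => (1:ℝ)),
        Finset.sum_ite_eq' Finset.univ p (fun _ => (1:ℝ)/2)]
      simp [Finset.card_univ, hcard, Set.mem_setOf_eq, if_pos (⟨p, hup, hnadj⟩ : ∃ v, u ≠ v ∧ ¬ G.Adj u v)]
    · have hterm : ∀ v : V, (1 : ℝ) / (G.dist u v) = 1 - (if v = u then (1 : ℝ) else 0) := by
        intro v
        by_cases hvu : v = u
        · subst hvu; rw [SimpleGraph.dist_self]; simp
        · push_neg at hu
          have hadj : G.Adj u v := hu v (fun h => hvu h.symm)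
          rw [SimpleGraph.dist_eq_one_iff_adj.mpr hadj]; simp [hvu]
      rw [Finset.sum_congr rfl (fun v _ => hterm v)]
      rw [Finset.sum_sub_distrib, Finset.sum_const,
        Finset.sum_ite_eq' Finset.univ u (fun _ => (1:ℝ))]
      simp [Finset.card_univ, hcard, hu]
  unfold hararyIndex
  rw [Finset.sum_congr rfl (fun u _ => key u)]
  rw [Finset.sum_sub_distrib, Finset.sum_const, Finset.card_univ, hcard]
  have hsum : ∑ u : V, (if u ∈ {u : V | ∃ v, u ≠ v ∧ ¬ G.Adj u v} then (1 : ℝ) / 2 else 0) =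
      ({u : V | ∃ v, u ≠ v ∧ ¬ G.Adj u v}.ncard : ℝ) / 2 := by
    rw [Finset.sum_ite, Finset.sum_const, Finset.sum_const_zero]
    rw [Set.ncard_eq_toFinset_card']
    have : {u : V | ∃ v, u ≠ v ∧ ¬ G.Adj u v}.toFinset =
        Finset.univ.filter (fun u => u ∈ {u : V | ∃ v, u ≠ v ∧ ¬ G.Adj u v}) := by
      ext u; simp
    rw [this]
    simp [nsmul_eq_mul]
    ring
  rw [hsum]
  ring
lemma ncard_compl_eq {s : Set V} {n : ℕ} (hcard : Fintype.card V = n) :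
    (sᶜ : Set V).ncard = n - s.ncard := by
  have := Set.ncard_add_ncard_compl s (Set.toFinite _) (Set.toFinite _)
  rw [Nat.card_eq_fintype_card, hcard] at this
  omega

lemma vc_le_of_pair {G : SimpleGraph V} {n : ℕ} (hn : 4 ≤ n) (hcard : Fintype.card V = n)
    {u v : V} (huv : u ≠ v) (hadj : ¬ G.Adj u v) :
    (n - 2) ∈ {k | ∃ S : Set V, S.ncard = k ∧
      (¬ (G.induce (Sᶜ : Set V)).Connected ∨ (Sᶜ : Set V).ncard = 1)} := by
  refine ⟨({u, v} : Set V)ᶜ, ?_, Or.inl ?_⟩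
  · rw [ncard_compl_eq hcard, Set.ncard_pair huv]
  · rw [compl_compl]
    refine induce_not_connected_of_isolated G (Set.mem_insert _ _)
      (Set.mem_insert_of_mem _ rfl) huv ?_
    intro w hw
    rcases hw with rfl | hw
    · exact fun h => G.irrefl h
    · rcases hw with rfl
      exact hadj

lemma vc_eq_of_compMatching {n : ℕ} (hn : 4 ≤ n) (hcard : Fintype.card V = n)
    {G : SimpleGraph V} (hm : CompMatching G)
    (hex : ∃ u v, u ≠ v ∧ ¬ G.Adj u v) : vertexConnectivity G = n - 2 := by
  obtain ⟨u, v, huv, hadj⟩ := hex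
  have hmem := vc_le_of_pair hn hcard huv hadj (G := G)
  refine le_antisymm (Nat.sInf_le hmem) ?_
  refine le_csInf ⟨_, hmem⟩ ?_
  rintro k ⟨S, rfl, hdis⟩
  by_contra hlt
  push_neg at hlt
  have h3 : 3 ≤ (Sᶜ : Set V).ncard := by
    rw [ncard_compl_eq hcard]
    omega
  rcases hdis with hdis | hdis
  · exact hdis (induce_connected_of_compMatching hm h3)
  · omega
lemma compMatching_of_vc {n : ℕ} (hn : 4 ≤ n) (hcard : Fintype.card V = n)
    {G : SimpleGraph V} (hconn : vertexConnectivity G = n - 2) :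
    CompMatching G ∧ ∃ u v, u ≠ v ∧ ¬ G.Adj u v := by
  constructor
  · intro v u w hvu hvw hnu hnw
    by_contra huw
    have hmem : (n - 3) ∈ {k | ∃ S : Set V, S.ncard = k ∧
        (¬ (G.induce (Sᶜ : Set V)).Connected ∨ (Sᶜ : Set V).ncard = 1)} := by
      refine ⟨({u, v, w} : Set V)ᶜ, ?_, Or.inl ?_⟩
      · rw [ncard_compl_eq hcard]
        rw [Set.ncard_insert_of_notMem (by simp only [Set.mem_insert_iff, Set.mem_singleton_iff]; push_neg; exact ⟨fun h => hvu h.symm, huw⟩),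
          Set.ncard_pair hvw]
      · rw [compl_compl]
        refine induce_not_connected_of_isolated G
          (Set.mem_insert_of_mem _ (Set.mem_insert _ _)) (Set.mem_insert _ _) hvu ?_
        intro x hx
        rcases hx with rfl | hx
        · exact hnu
        · rcases hx with rfl | hx
          · exact fun h => G.irrefl h
          · rcases hx with rfl
            exact hnw
    have := Nat.sInf_le hmem
    rw [vertexConnectivity] at hconn
    omega
  · have hne : {k | ∃ S : Set V, S.ncard = k ∧
        (¬ (G.induce (Sᶜ : Set V)).Connected ∨ (Sᶜ : Set V).ncard = 1)}.Nonempty := by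
      refine ⟨n, (Set.univ : Set V), by rw [Set.ncard_univ, Nat.card_eq_fintype_card, hcard], Or.inl ?_⟩
      intro hc
      have : Nonempty (Set.univᶜ : Set V) := hc.nonempty
      rw [Set.compl_univ] at this
      exact (Set.not_nonempty_empty (Set.nonempty_coe_sort.mp this))
    have hmem := Nat.sInf_mem hne
    rw [← vertexConnectivity, hconn] at hmem
    obtain ⟨S, hS, hdis⟩ := hmem
    have h2 : (Sᶜ : Set V).ncard = 2 := by
      rw [ncard_compl_eq hcard]; omega
    rcases hdis with hdis | hdis
    · obtain ⟨x, y, hxy, hset⟩ := Set.ncard_eq_two.mp h2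
      refine ⟨x, y, hxy, fun hadj => ?_⟩
      rw [hset] at hdis
      exact hdis (induce_pair_connected hadj)
    · omega
lemma exists_equiv_four {V : Type*} [Fintype V] {n : ℕ} (hcard : Fintype.card V = n)
    {a b c d : V} (hab : a ≠ b) (hac : a ≠ c) (had : a ≠ d) (hbc : b ≠ c)
    (hbd : b ≠ d) (hcd : c ≠ d)
    {w x y z : Fin n} (hwx : w ≠ x) (hwy : w ≠ y) (hwz : w ≠ z) (hxy : x ≠ y)
    (hxz : x ≠ z) (hyz : y ≠ z) :
    ∃ e : V ≃ Fin n, e a = w ∧ e b = x ∧ e c = y ∧ e d = z := by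
  classical
  set f : V → Fin n := fun v => if v = a then w else if v = b then x else if v = c then y else z
    with hf
  have hfa : f a = w := by simp [hf]
  have hfb : f b = x := by simp [hf, hab.symm]
  have hfc : f c = y := by simp [hf, hac.symm, hbc.symm]
  have hfd : f d = z := by simp [hf, had.symm, hbd.symm, hcd.symm]
  have hαt : Fintype.card V = (Finset.univ : Finset (Fin n)).card := by
    simp [hcard]
  have hsub : Finset.image f ({a, b, c, d} : Finset V) ⊆ Finset.univ := Finset.subset_univ _
  have hinj : Set.InjOn f ({a, b, c, d} : Finset V) := by
    intro p hp q hq hpq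
    simp only [Finset.coe_insert, Set.mem_insert_iff, Finset.coe_singleton,
      Set.mem_singleton_iff] at hp hq
    rcases hp with rfl | rfl | rfl | rfl <;> rcases hq with rfl | rfl | rfl | rfl <;>
      simp only [hfa, hfb, hfc, hfd] at hpq <;> first | rfl | (exfalso; tauto)
  obtain ⟨g, hg⟩ := Finset.exists_equiv_extend_of_card_eq hαt hsub hinj
  refine ⟨g.trans (Equiv.subtypeUnivEquiv fun x => Finset.mem_univ x), ?_, ?_, ?_, ?_⟩
  · rw [Equiv.trans_apply]
    show ((g a : Fin n)) = w
    rw [hg a (by simp), hfa]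
  · rw [Equiv.trans_apply]
    show ((g b : Fin n)) = x
    rw [hg b (by simp), hfb]
  · rw [Equiv.trans_apply]
    show ((g c : Fin n)) = y
    rw [hg c (by simp), hfc]
  · rw [Equiv.trans_apply]
    show ((g d : Fin n)) = z
    rw [hg d (by simp), hfd]
lemma Knr_adj {n : ℕ} (hn : 4 ≤ n) (x y : Fin n) :
    (Knr n (n - 2)).Adj x y ↔ x ≠ y ∧
      ¬ (((x : ℕ) = n - 2 ∧ (y : ℕ) = n - 1) ∨ ((x : ℕ) = n - 1 ∧ (y : ℕ) = n - 2)) := by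
  have hx := x.isLt
  have hy := y.isLt
  simp only [Knr, SimpleGraph.fromRel_adj, ne_eq, Fin.ext_iff]
  omega

lemma KO2_adj {n : ℕ} (hn : 4 ≤ n) (x y : Fin n) :
    (KO2minusEdge n).Adj x y ↔ x ≠ y ∧
      ¬ (((x : ℕ) = 0 ∧ (y : ℕ) = 1) ∨ ((x : ℕ) = 1 ∧ (y : ℕ) = 0) ∨
         ((x : ℕ) = n - 2 ∧ (y : ℕ) = n - 1) ∨ ((x : ℕ) = n - 1 ∧ (y : ℕ) = n - 2)) := by
  have hx := x.isLt
  have hy := y.isLt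
  simp only [KO2minusEdge, SimpleGraph.fromRel_adj, ne_eq, Fin.ext_iff]
  omega

lemma KO2_compMatching {n : ℕ} (hn : 4 ≤ n) : CompMatching (KO2minusEdge n) := by
  intro v u w hvu hvw hnu hnw
  rw [KO2_adj hn] at hnu hnw
  have h1 : ((v : ℕ) = 0 ∧ (u : ℕ) = 1) ∨ ((v : ℕ) = 1 ∧ (u : ℕ) = 0) ∨
      ((v : ℕ) = n - 2 ∧ (u : ℕ) = n - 1) ∨ ((v : ℕ) = n - 1 ∧ (u : ℕ) = n - 2) := by
    tauto
  have h2 : ((v : ℕ) = 0 ∧ (w : ℕ) = 1) ∨ ((v : ℕ) = 1 ∧ (w : ℕ) = 0) ∨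
      ((v : ℕ) = n - 2 ∧ (w : ℕ) = n - 1) ∨ ((v : ℕ) = n - 1 ∧ (w : ℕ) = n - 2) := by
    tauto
  have := v.isLt
  apply Fin.ext
  omega

lemma KO2_exists_pair {n : ℕ} (hn : 4 ≤ n) :
    ∃ u v : Fin n, u ≠ v ∧ ¬ (KO2minusEdge n).Adj u v := by
  refine ⟨⟨0, by omega⟩, ⟨1, by omega⟩, ?_, ?_⟩
  · simp [Fin.ext_iff]
  · rw [KO2_adj hn]
    simp
lemma KO2_matched {n : ℕ} (hn : 4 ≤ n) :
    {u : Fin n | ∃ v, u ≠ v ∧ ¬ (KO2minusEdge n).Adj u v}.ncard = 4 := by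
  have h0 : (0 : ℕ) < n := by omega
  have h1 : (1 : ℕ) < n := by omega
  have h2 : n - 2 < n := by omega
  have h3 : n - 1 < n := by omega
  have hset : {u : Fin n | ∃ v, u ≠ v ∧ ¬ (KO2minusEdge n).Adj u v} =
      {⟨0, h0⟩, ⟨1, h1⟩, ⟨n - 2, h2⟩, ⟨n - 1, h3⟩} := by
    ext u
    simp only [Set.mem_setOf_eq, Set.mem_insert_iff, Set.mem_singleton_iff, Fin.ext_iff]
    constructor
    · rintro ⟨v, hne, hnadj⟩
      rw [KO2_adj hn] at hnadj
      have hp : ((u : ℕ) = 0 ∧ (v : ℕ) = 1) ∨ ((u : ℕ) = 1 ∧ (v : ℕ) = 0) ∨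
          ((u : ℕ) = n - 2 ∧ (v : ℕ) = n - 1) ∨ ((u : ℕ) = n - 1 ∧ (v : ℕ) = n - 2) := by
        tauto
      have hne' : (u : ℕ) ≠ (v : ℕ) := fun h => hne (Fin.ext h)
      omega
    · intro h
      rcases h with h | h | h | h
      · refine ⟨⟨1, h1⟩, by simp [Fin.ext_iff]; omega, ?_⟩
        rw [KO2_adj hn]; simp; try omega
      · refine ⟨⟨0, h0⟩, by simp [Fin.ext_iff]; omega, ?_⟩
        rw [KO2_adj hn]; simp; try omega
      · refine ⟨⟨n - 1, h3⟩, by simp [Fin.ext_iff]; omega, ?_⟩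
        rw [KO2_adj hn]; simp; try omega
      · refine ⟨⟨n - 2, h2⟩, by simp [Fin.ext_iff]; omega, ?_⟩
        rw [KO2_adj hn]; simp; try omega
  rw [hset]
  rw [Set.ncard_insert_of_notMem (by simp [Fin.ext_iff]; omega),
    Set.ncard_insert_of_notMem (by simp [Fin.ext_iff]; omega),
    Set.ncard_insert_of_notMem (by simp [Fin.ext_iff]; omega),
    Set.ncard_singleton]

lemma KO2_not_iso {n : ℕ} (hn : 4 ≤ n) :
    ¬ Nonempty (KO2minusEdge n ≃g Knr n (n - 2)) := by
  rintro ⟨f⟩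
  have key : ∀ x y : Fin n, x ≠ y → ¬ (KO2minusEdge n).Adj x y →
      (((f x : ℕ) = n - 2 ∧ (f y : ℕ) = n - 1) ∨ ((f x : ℕ) = n - 1 ∧ (f y : ℕ) = n - 2)) := by
    intro x y hxy hnadj
    have h1 : ¬ (Knr n (n - 2)).Adj (f x) (f y) := fun h => hnadj (f.map_adj_iff.mp h)
    have h2 : f x ≠ f y := fun h => hxy (f.injective h)
    rw [Knr_adj hn] at h1
    tauto
  have h0 : (0 : ℕ) < n := by omega
  have h1 : (1 : ℕ) < n := by omega
  have h2 : n - 2 < n := by omega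
  have h3 : n - 1 < n := by omega
  have k1 := key ⟨0, h0⟩ ⟨1, h1⟩ (by simp [Fin.ext_iff]) (by rw [KO2_adj hn]; simp)
  have k2 := key ⟨n - 2, h2⟩ ⟨n - 1, h3⟩ (by simp only [ne_eq, Fin.ext_iff, Fin.val_mk, Nat.cast_id]; omega)
    (by rw [KO2_adj hn]; simp)
  have d1 : (f ⟨0, h0⟩ : ℕ) ≠ (f ⟨n - 2, h2⟩ : ℕ) := by
    simp only [ne_eq, ← Fin.ext_iff, EmbeddingLike.apply_eq_iff_eq]
    simp [Fin.ext_iff]; omega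
  have d2 : (f ⟨0, h0⟩ : ℕ) ≠ (f ⟨n - 1, h3⟩ : ℕ) := by
    simp only [ne_eq, ← Fin.ext_iff, EmbeddingLike.apply_eq_iff_eq]
    simp [Fin.ext_iff]; omega
  have d3 : (f ⟨1, h1⟩ : ℕ) ≠ (f ⟨n - 2, h2⟩ : ℕ) := by
    simp only [ne_eq, ← Fin.ext_iff, EmbeddingLike.apply_eq_iff_eq]
    simp [Fin.ext_iff]; omega
  omega

end Helpers

/-- For `n ≥ 4` and `r = n − 2`, a graph attaining the second maximum Harary index
among graphs of order `n` with vertex connectivity `n − 2` is obtained from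
`K_{n-2} ∨ O_2` by deleting an edge inside `K_{n-2}`. -/
theorem harary_secondMax_vertexConnectivity_high (n : ℕ) (hn : 4 ≤ n)
    {V : Type*} [Fintype V] (G : SimpleGraph V) (hcard : Fintype.card V = n)
    (hconn : vertexConnectivity G = n - 2)
    (hne : ¬ Nonempty (G ≃g Knr n (n - 2)))
    (hmax : ∀ G' : SimpleGraph (Fin n), vertexConnectivity G' = n - 2 →
      ¬ Nonempty (G' ≃g Knr n (n - 2)) → hararyIndex G' ≤ hararyIndex G) :
    Nonempty (G ≃g KO2minusEdge n) := by
  classical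
  obtain ⟨hm, u0, v0, huv0, hnadj0⟩ := compMatching_of_vc hn hcard hconn
  have h0 : (0 : ℕ) < n := by omega
  have h1 : (1 : ℕ) < n := by omega
  have h2 : n - 2 < n := by omega
  have h3 : n - 1 < n := by omega
  have hval : ∀ (e : V ≃ Fin n) (q : V) (m : ℕ) (hmn : m < n), e q = ⟨m, hmn⟩ →
      (∀ p : V, (((e p : Fin n) : ℕ) = m ↔ p = q)) := by
    intro e q m hmn hq p
    constructor
    · intro h
      apply e.injective
      rw [hq]
      exact Fin.ext (by simpa using h)
    · rintro rfl
      simp [hq]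
  -- Step 1: there is a second non-adjacent pair, besides `{u0, v0}`.
  have hsecond : ∃ c d : V, c ≠ d ∧ ¬ G.Adj c d ∧
      ¬ ((c = u0 ∧ d = v0) ∨ (c = v0 ∧ d = u0)) := by
    by_contra hcon
    push_neg at hcon
    have hchar : ∀ x y : V, G.Adj x y ↔ x ≠ y ∧
        ¬ ((x = u0 ∧ y = v0) ∨ (x = v0 ∧ y = u0)) := by
      intro x y
      constructor
      · intro hadj
        refine ⟨hadj.ne, ?_⟩
        rintro (⟨rfl, rfl⟩ | ⟨rfl, rfl⟩)
        · exact hnadj0 hadj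
        · exact hnadj0 hadj.symm
      · rintro ⟨hxy, hp⟩
        by_contra hnadj
        exact hp (hcon x y hxy hnadj)
    obtain ⟨c, hc, d, hd, hcdne⟩ : ∃ c ∈ (Finset.univ \ {u0, v0} : Finset V),
        ∃ d ∈ (Finset.univ \ {u0, v0} : Finset V), c ≠ d := by
      apply Finset.one_lt_card.mp
      rw [Finset.card_sdiff_of_subset (Finset.subset_univ _), Finset.card_univ, hcard,
        Finset.card_pair huv0]
      omega
    simp only [Finset.mem_sdiff, Finset.mem_univ, Finset.mem_insert, Finset.mem_singleton,
      true_and, not_or] at hc hd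
    obtain ⟨e, he1, he2, he3, he4⟩ := exists_equiv_four hcard huv0
      (Ne.symm hc.1) (Ne.symm hd.1) (Ne.symm hc.2) (Ne.symm hd.2) hcdne
      (w := (⟨n - 2, h2⟩ : Fin n)) (x := (⟨n - 1, h3⟩ : Fin n))
      (y := (⟨0, h0⟩ : Fin n)) (z := (⟨1, h1⟩ : Fin n))
      (by simp only [ne_eq, Fin.mk.injEq]; omega)
      (by simp only [ne_eq, Fin.mk.injEq]; omega)
      (by simp only [ne_eq, Fin.mk.injEq]; omega)
      (by simp only [ne_eq, Fin.mk.injEq]; omega)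
      (by simp only [ne_eq, Fin.mk.injEq]; omega)
      (by simp only [ne_eq, Fin.mk.injEq]; omega)
    have hv2 := hval e u0 (n - 2) h2 he1
    have hv3 := hval e v0 (n - 1) h3 he2
    refine absurd (⟨⟨e, fun {a b} => ?_⟩⟩ : Nonempty (G ≃g Knr n (n - 2))) hne
    rw [Knr_adj hn, hchar a b]
    constructor
    · rintro ⟨hne', hp⟩
      refine ⟨fun h => hne' (by rw [h]), ?_⟩
      rintro (⟨hA, hB⟩ | ⟨hA, hB⟩)
      · exact hp (Or.inl ⟨(hv2 a).mpr hA, (hv3 b).mpr hB⟩)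
      · exact hp (Or.inr ⟨(hv3 a).mpr hA, (hv2 b).mpr hB⟩)
    · rintro ⟨hab, hp⟩
      refine ⟨fun h => hab (e.injective h), ?_⟩
      rintro (⟨hA, hB⟩ | ⟨hA, hB⟩)
      · exact hp (Or.inl ⟨(hv2 a).mp hA, (hv3 b).mp hB⟩)
      · exact hp (Or.inr ⟨(hv3 a).mp hA, (hv2 b).mp hB⟩)
  obtain ⟨c, d, hcd, hnadjcd, hpair⟩ := hsecond
  -- Step 2: the four vertices are pairwise distinct.
  have hcu : c ≠ u0 := by
    rintro rfl
    exact hpair (Or.inl ⟨rfl, (hm huv0 hcd hnadj0 hnadjcd).symm⟩)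
  have hcv : c ≠ v0 := by
    rintro rfl
    exact hpair (Or.inr ⟨rfl,
      (hm (Ne.symm huv0) hcd (fun h => hnadj0 h.symm) hnadjcd).symm⟩)
  have hdu : d ≠ u0 := by
    rintro rfl
    exact hpair (Or.inr ⟨(hm huv0 (Ne.symm hcd) hnadj0 (fun h => hnadjcd h.symm)).symm, rfl⟩)
  have hdv : d ≠ v0 := by
    rintro rfl
    exact hpair (Or.inl ⟨(hm (Ne.symm huv0) (Ne.symm hcd) (fun h => hnadj0 h.symm)
      (fun h => hnadjcd h.symm)).symm, rfl⟩)
  -- Step 3: the set of matched vertices is exactly `{u0, v0, c, d}`.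
  have hsub : ({u0, v0, c, d} : Set V) ⊆ {u : V | ∃ v, u ≠ v ∧ ¬ G.Adj u v} := by
    intro x hx
    simp only [Set.mem_insert_iff, Set.mem_singleton_iff] at hx
    rcases hx with rfl | rfl | rfl | rfl
    · exact ⟨v0, huv0, hnadj0⟩
    · exact ⟨u0, Ne.symm huv0, fun h => hnadj0 h.symm⟩
    · exact ⟨d, hcd, hnadjcd⟩
    · exact ⟨c, Ne.symm hcd, fun h => hnadjcd h.symm⟩
  have hcard4 : ({u0, v0, c, d} : Set V).ncard = 4 := by
    rw [Set.ncard_insert_of_notMem (by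
        simp only [Set.mem_insert_iff, Set.mem_singleton_iff]
        push_neg
        exact ⟨huv0, Ne.symm hcu, Ne.symm hdu⟩),
      Set.ncard_insert_of_notMem (by
        simp only [Set.mem_insert_iff, Set.mem_singleton_iff]
        push_neg
        exact ⟨Ne.symm hcv, Ne.symm hdv⟩),
      Set.ncard_insert_of_notMem (by simpa using hcd),
      Set.ncard_singleton]
  have hKO2cm := KO2_compMatching (n := n) hn
  have hKO2vc := vc_eq_of_compMatching hn (Fintype.card_fin n) hKO2cm (KO2_exists_pair hn)
  have hle := hmax (KO2minusEdge n) hKO2vc (KO2_not_iso hn)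
  rw [harary_formula hn (Fintype.card_fin n) hKO2cm, harary_formula hn hcard hm,
    KO2_matched hn] at hle
  have htle : {u : V | ∃ v, u ≠ v ∧ ¬ G.Adj u v}.ncard ≤ 4 := by
    by_contra hgt
    push_neg at hgt
    have hgt' : (4 : ℝ) < ({u : V | ∃ v, u ≠ v ∧ ¬ G.Adj u v}.ncard : ℝ) := by
      exact_mod_cast hgt
    have h4 : ((4 : ℕ) : ℝ) = 4 := by norm_num
    rw [h4] at hle
    linarith
  have hMeq : {u : V | ∃ v, u ≠ v ∧ ¬ G.Adj u v} = ({u0, v0, c, d} : Set V) := by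
    symm
    refine Set.eq_of_subset_of_ncard_le hsub ?_ (Set.toFinite _)
    rw [hcard4]
    exact htle
  -- Step 4: the adjacency characterization of `G`.
  have hchar : ∀ x y : V, G.Adj x y ↔ x ≠ y ∧
      ¬ ((x = u0 ∧ y = v0) ∨ (x = v0 ∧ y = u0) ∨ (x = c ∧ y = d) ∨ (x = d ∧ y = c)) := by
    intro x y
    constructor
    · intro hadj
      refine ⟨hadj.ne, ?_⟩
      rintro (⟨rfl, rfl⟩ | ⟨rfl, rfl⟩ | ⟨rfl, rfl⟩ | ⟨rfl, rfl⟩)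
      · exact hnadj0 hadj
      · exact hnadj0 hadj.symm
      · exact hnadjcd hadj
      · exact hnadjcd hadj.symm
    · rintro ⟨hxy, hp⟩
      by_contra hnadj
      have hxM : x ∈ {u : V | ∃ v, u ≠ v ∧ ¬ G.Adj u v} := ⟨y, hxy, hnadj⟩
      rw [hMeq] at hxM
      simp only [Set.mem_insert_iff, Set.mem_singleton_iff] at hxM
      rcases hxM with rfl | rfl | rfl | rfl
      · exact hp (Or.inl ⟨rfl, hm hxy huv0 hnadj hnadj0⟩)
      · exact hp (Or.inr (Or.inl ⟨rfl,
          hm hxy (Ne.symm huv0) hnadj (fun h => hnadj0 h.symm)⟩))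
      · exact hp (Or.inr (Or.inr (Or.inl ⟨rfl, hm hxy hcd hnadj hnadjcd⟩)))
      · exact hp (Or.inr (Or.inr (Or.inr ⟨rfl,
          hm hxy (Ne.symm hcd) hnadj (fun h => hnadjcd h.symm)⟩)))
  -- Step 5: build the isomorphism.
  obtain ⟨e, he1, he2, he3, he4⟩ := exists_equiv_four hcard huv0
    (Ne.symm hcu) (Ne.symm hdu) (Ne.symm hcv) (Ne.symm hdv) hcd
    (w := (⟨0, h0⟩ : Fin n)) (x := (⟨1, h1⟩ : Fin n))
    (y := (⟨n - 2, h2⟩ : Fin n)) (z := (⟨n - 1, h3⟩ : Fin n))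
    (by simp only [ne_eq, Fin.mk.injEq]; omega)
    (by simp only [ne_eq, Fin.mk.injEq]; omega)
    (by simp only [ne_eq, Fin.mk.injEq]; omega)
    (by simp only [ne_eq, Fin.mk.injEq]; omega)
    (by simp only [ne_eq, Fin.mk.injEq]; omega)
    (by simp only [ne_eq, Fin.mk.injEq]; omega)
  have hv0 := hval e u0 0 h0 he1
  have hv1 := hval e v0 1 h1 he2
  have hv2 := hval e c (n - 2) h2 he3
  have hv3 := hval e d (n - 1) h3 he4
  refine ⟨⟨e, fun {a b} => ?_⟩⟩
  rw [KO2_adj hn, hchar a b]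
  constructor
  · rintro ⟨hne', hp⟩
    refine ⟨fun h => hne' (by rw [h]), ?_⟩
    rintro (⟨hA, hB⟩ | ⟨hA, hB⟩ | ⟨hA, hB⟩ | ⟨hA, hB⟩)
    · exact hp (Or.inl ⟨(hv0 a).mpr hA, (hv1 b).mpr hB⟩)
    · exact hp (Or.inr (Or.inl ⟨(hv1 a).mpr hA, (hv0 b).mpr hB⟩))
    · exact hp (Or.inr (Or.inr (Or.inl ⟨(hv2 a).mpr hA, (hv3 b).mpr hB⟩)))
    · exact hp (Or.inr (Or.inr (Or.inr ⟨(hv3 a).mpr hA, (hv2 b).mpr hB⟩)))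
  · rintro ⟨hab, hp⟩
    refine ⟨fun h => hab (e.injective h), ?_⟩
    rintro (⟨hA, hB⟩ | ⟨hA, hB⟩ | ⟨hA, hB⟩ | ⟨hA, hB⟩)
    · exact hp (Or.inl ⟨(hv0 a).mp hA, (hv1 b).mp hB⟩)
    · exact hp (Or.inr (Or.inl ⟨(hv1 a).mp hA, (hv0 b).mp hB⟩))
    · exact hp (Or.inr (Or.inr (Or.inl ⟨(hv2 a).mp hA, (hv3 b).mp hB⟩)))
    · exact hp (Or.inr (Or.inr (Or.inr ⟨(hv3 a).mp hA, (hv2 b).mp hB⟩)))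
end
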